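/- With notation as in the setup, let φ ∈ ℂ[[X]][Y] be monic, irreducible over ℂ[[X]], of degree M ≥ 1 in Y, with φ(0,0) = 0 and φ ≠ f, and with primitive Newton–Puiseux parameterization X = U^M, Y = z(U) ∈ ℂ[[U]]. Define the coincidence order K(f,φ) := (1/(NM)) · max{ ord_S( y(ωS^M) − z(ω′S^N) ) : ω a complex N-th root of unity, ω′ a complex M-th root of unity }, where ord_S is the S-adic order in ℂ[[S]]. Let k ∈ {0, …, G} be the smallest integer such that K(f,φ) < B_{k+1}/N (with B_{G+1} = ∞). Then (f, φ) = M · ( Σ_{i=1}^{k} ((E_{i−1} − E_i)/N)·B_i + E_k·K(f,φ) ); equivalently, for k ≥ 1, (f,φ)/M = B̄_k/(N₁⋯N_{k−1}) + (N·K(f,φ) − B_k)/(N₁⋯N_k). -/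

import Mathlib

noncomputable section

/-- The substitution `X ↦ T ^ n` on formal power series, described coefficientwise:
the coefficient of `T ^ j` in `substPow n σ` is the coefficient of `X ^ (j / n)` in `σ`
when `n ∣ j`, and `0` otherwise. -/
def substPow (n : ℕ) (σ : PowerSeries ℂ) : PowerSeries ℂ :=
  PowerSeries.mk fun j => if n ∣ j then PowerSeries.coeff (j / n) σ else 0

/-- The power series `φ (T ^ n, w (T))`, for `φ ∈ ℂ[[X]][Y]` and `w ∈ ℂ[[T]]`. -/
def evalCurve (n : ℕ) (w : PowerSeries ℂ) (φ : Polynomial (PowerSeries ℂ)) :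
    PowerSeries ℂ :=
  ∑ i ∈ Finset.range (φ.natDegree + 1), substPow n (φ.coeff i) * w ^ i

/-- `X = T ^ n`, `Y = w (T)` is a primitive Newton–Puiseux parameterization of the curve
defined by `q ∈ ℂ[[X]][Y]`: one has `q (T ^ n, w (T)) = 0`, `w` has zero constant term, and
`gcd ({n} ∪ {j : coeff j w ≠ 0}) = 1`. -/
def IsNPParam (q : Polynomial (PowerSeries ℂ)) (n : ℕ) (w : PowerSeries ℂ) : Prop :=
  evalCurve n w q = 0 ∧ PowerSeries.constantCoeff w = 0 ∧
    ∀ d : ℕ, d ∣ n → (∀ j, PowerSeries.coeff j w ≠ 0 → d ∣ j) → d = 1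

/-- `B 0, B 1, …, B G` is the characteristic sequence of the primitive Newton–Puiseux
parameterization `X = T ^ n`, `Y = w (T)`:  `B 0 = n`; for `1 ≤ i ≤ G`, `B i` is the least
exponent `j` of a nonzero term of `w` such that `gcd (B 0, …, B (i-1)) ∤ j`; and `G` is the
least index for which `gcd (B 0, …, B G) = 1`. -/
def IsCharSeq (n : ℕ) (w : PowerSeries ℂ) (G : ℕ) (B : ℕ → ℕ) : Prop :=
  B 0 = n ∧
    (∀ i, 1 ≤ i → i ≤ G →
      B i = sInf {j : ℕ | PowerSeries.coeff j w ≠ 0 ∧ ¬ (Finset.range i).gcd B ∣ j}) ∧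
    (Finset.range (G + 1)).gcd B = 1 ∧ ∀ i < G, (Finset.range (i + 1)).gcd B ≠ 1

/-- `Ebar B i = gcd (B 0, …, B i)`, the sequence of greatest common divisors. -/
def Ebar (B : ℕ → ℕ) (i : ℕ) : ℕ := (Finset.range (i + 1)).gcd B

/-- The generators of the semigroup:
`B̄ 0 = B 0` and `B̄ i = B i + Σ_{k=1}^{i-1} ((E (k-1) - E k) / E (i-1)) * B k` for `i ≥ 1`. -/
def Bbar (B : ℕ → ℕ) (i : ℕ) : ℕ :=
  if i = 0 then B 0
  else B i + ∑ k ∈ Finset.Ico 1 i, ((Ebar B (k - 1) - Ebar B k) / Ebar B (i - 1)) * B k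

/-- `B̄ i` as an extended natural number, with the convention `B̄ (G + 1) = ∞`. -/
def BbarTop (G : ℕ) (B : ℕ → ℕ) (i : ℕ) : ℕ∞ :=
  if i ≤ G then (Bbar B i : ℕ∞) else ⊤

/-- `q` is a `k`-semiroot of the branch parameterized by `X = T ^ N`, `Y = y (T)` with
characteristic sequence `B 0, …, B G`:  `q` is monic of `Y`-degree `N / E k` and the
intersection number `(f, q)`, i.e. the `T`-adic order of `q (T ^ N, y (T))`, equals
`B̄ (k+1)` (which is `∞` for `k = G`). -/
def IsSemiroot (N : ℕ) (y : PowerSeries ℂ) (G : ℕ) (B : ℕ → ℕ) (k : ℕ)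
    (q : Polynomial (PowerSeries ℂ)) : Prop :=
  q.Monic ∧ q.natDegree = N / Ebar B k ∧ (evalCurve N y q).order = BbarTop G B (k + 1)

open PowerSeries Polynomial Finset

lemma coeff_substPow (n j : ℕ) (σ : PowerSeries ℂ) :
    PowerSeries.coeff j (substPow n σ) =
      if n ∣ j then PowerSeries.coeff (j / n) σ else 0 := by
  simp [substPow]

lemma coeff_substPow_mul (n j : ℕ) (hn : n ≠ 0) (σ : PowerSeries ℂ) :
    PowerSeries.coeff (n * j) (substPow n σ) = PowerSeries.coeff j σ := by
  rw [coeff_substPow, if_pos (Dvd.intro j rfl), Nat.mul_div_cancel_left _ (Nat.pos_of_ne_zero hn)]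

lemma substPow_add (n : ℕ) (a b : PowerSeries ℂ) :
    substPow n (a + b) = substPow n a + substPow n b := by
  ext j
  simp only [coeff_substPow, map_add]
  split <;> simp

lemma substPow_one (n : ℕ) (hn : n ≠ 0) : substPow n 1 = 1 := by
  ext j
  rw [coeff_substPow]
  rcases eq_or_ne j 0 with rfl | hj
  · simp
  · have h0 : PowerSeries.coeff j (1 : PowerSeries ℂ) = 0 := by
      rw [PowerSeries.coeff_one, if_neg hj]
    rw [h0]
    split_ifs with h
    · rw [PowerSeries.coeff_one, if_neg]
      intro h0'
      obtain ⟨c, rfl⟩ := h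
      rw [Nat.mul_div_cancel_left c (Nat.pos_of_ne_zero hn)] at h0'
      subst h0'
      simp at hj
    · rfl

lemma substPow_mul (n : ℕ) (hn : n ≠ 0) (a b : PowerSeries ℂ) :
    substPow n (a * b) = substPow n a * substPow n b := by
  ext j
  rw [PowerSeries.coeff_mul, coeff_substPow]
  split_ifs with h
  · obtain ⟨m, rfl⟩ := h
    rw [Nat.mul_div_cancel_left _ (Nat.pos_of_ne_zero hn), PowerSeries.coeff_mul]
    have hsub : (Finset.HasAntidiagonal.antidiagonal m).image (fun p : ℕ × ℕ => (n * p.1, n * p.2)) ⊆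
        Finset.HasAntidiagonal.antidiagonal (n * m) := by
      intro p hp
      simp only [Finset.mem_image, Finset.HasAntidiagonal.mem_antidiagonal] at hp ⊢
      obtain ⟨q, hq, rfl⟩ := hp
      rw [← Nat.mul_add, hq]
    have hzero : ∀ p ∈ Finset.HasAntidiagonal.antidiagonal (n * m),
        p ∉ (Finset.HasAntidiagonal.antidiagonal m).image (fun p : ℕ × ℕ => (n * p.1, n * p.2)) →
        PowerSeries.coeff p.1 (substPow n a) * PowerSeries.coeff p.2 (substPow n b) = 0 := by
      intro p hp hp2
      simp only [Finset.mem_image, Finset.HasAntidiagonal.mem_antidiagonal, not_exists] at hp hp2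
      rw [coeff_substPow, coeff_substPow]
      by_cases h1 : n ∣ p.1
      · by_cases h2 : n ∣ p.2
        · exfalso
          obtain ⟨c, hc⟩ := h1
          obtain ⟨d, hd⟩ := h2
          exact hp2 (c, d)
            ⟨by
              refine Nat.eq_of_mul_eq_mul_left (Nat.pos_of_ne_zero hn) ?_
              rw [Nat.mul_add, ← hc, ← hd, hp],
            Prod.ext hc.symm hd.symm⟩
        · rw [if_neg h2, mul_zero]
      · rw [if_neg h1, zero_mul]
    have hinj : ∀ x ∈ Finset.HasAntidiagonal.antidiagonal m, ∀ y ∈ Finset.HasAntidiagonal.antidiagonal m,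
        (fun p : ℕ × ℕ => (n * p.1, n * p.2)) x = (fun p : ℕ × ℕ => (n * p.1, n * p.2)) y →
        x = y := by
      intro x _ y _ hxy
      simp only [Prod.mk.injEq] at hxy
      have hn' := Nat.pos_of_ne_zero hn
      exact Prod.ext (Nat.eq_of_mul_eq_mul_left hn' hxy.1)
        (Nat.eq_of_mul_eq_mul_left hn' hxy.2)
    rw [← Finset.sum_subset hsub hzero, Finset.sum_image hinj]
    refine Finset.sum_congr rfl fun p hp => ?_
    rw [coeff_substPow_mul _ _ hn, coeff_substPow_mul _ _ hn]
  · symm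
    apply Finset.sum_eq_zero
    intro p hp
    rw [Finset.HasAntidiagonal.mem_antidiagonal] at hp
    rw [coeff_substPow, coeff_substPow]
    by_cases h1 : n ∣ p.1
    · by_cases h2 : n ∣ p.2
      · exact absurd (hp ▸ Nat.dvd_add h1 h2) h
      · rw [if_neg h2, mul_zero]
    · rw [if_neg h1, zero_mul]

/-- `substPow n` as a ring homomorphism, for `n ≠ 0`. -/
def substPowHom (n : ℕ) (hn : n ≠ 0) : PowerSeries ℂ →+* PowerSeries ℂ where
  toFun := substPow n
  map_one' := substPow_one n hn
  map_mul' := substPow_mul n hn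
  map_zero' := by ext j; simp [coeff_substPow]
  map_add' := substPow_add n

@[simp] lemma substPowHom_apply (n : ℕ) (hn : n ≠ 0) (σ : PowerSeries ℂ) :
    substPowHom n hn σ = substPow n σ := rfl


lemma substPow_zero (n : ℕ) : substPow n 0 = 0 := by
  ext j; simp [coeff_substPow]

lemma substPow_substPow (n m : ℕ) (hn : n ≠ 0) (hm : m ≠ 0) (σ : PowerSeries ℂ) :
    substPow n (substPow m σ) = substPow (n * m) σ := by
  ext j
  simp only [coeff_substPow]
  by_cases h : n ∣ j
  · rw [if_pos h]
    by_cases h2 : m ∣ j / n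
    · rw [if_pos h2, if_pos (by
        obtain ⟨c, rfl⟩ := h
        obtain ⟨d, hd⟩ := h2
        rw [Nat.mul_div_cancel_left c (Nat.pos_of_ne_zero hn)] at hd
        exact hd ▸ ⟨d, by ring⟩), Nat.div_div_eq_div_mul]
    · rw [if_neg h2, if_neg (by
        rintro ⟨c, rfl⟩
        exact h2 ⟨c, by rw [mul_assoc, Nat.mul_div_cancel_left _ (Nat.pos_of_ne_zero hn)]⟩)]
  · rw [if_neg h, if_neg (fun hc => h (dvd_trans ⟨m, rfl⟩ hc))]

lemma rescale_substPow (a : ℂ) (n : ℕ) (hn : n ≠ 0) (σ : PowerSeries ℂ) :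
    PowerSeries.rescale a (substPow n σ) = substPow n (PowerSeries.rescale (a ^ n) σ) := by
  ext j
  rw [PowerSeries.coeff_rescale, coeff_substPow, coeff_substPow]
  by_cases h : n ∣ j
  · rw [if_pos h, if_pos h, PowerSeries.coeff_rescale, ← pow_mul,
      Nat.mul_div_cancel' h]
  · rw [if_neg h, if_neg h, mul_zero]

lemma substPow_injective (n : ℕ) (hn : n ≠ 0) : Function.Injective (substPow n) := by
  intro a b hab
  ext j
  have := congrArg (PowerSeries.coeff (n * j)) hab
  rwa [coeff_substPow_mul _ _ hn, coeff_substPow_mul _ _ hn] at this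

lemma order_substPow (n : ℕ) (hn : n ≠ 0) (σ : PowerSeries ℂ) :
    (substPow n σ).order = (n : ℕ∞) * σ.order := by
  rcases eq_or_ne σ 0 with rfl | hσ
  · rw [substPow_zero, PowerSeries.order_zero, ENat.mul_top (by exact_mod_cast hn)]
  · have : σ.order ≠ ⊤ := fun h => hσ (PowerSeries.order_eq_top.mp h)
    obtain ⟨m, hm⟩ := WithTop.ne_top_iff_exists.mp this
    have hm' := PowerSeries.order_eq_nat.mp hm.symm
    have key : (substPow n σ).order = ((n * m : ℕ) : ℕ∞) := by
      rw [PowerSeries.order_eq_nat]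
      constructor
      · rw [coeff_substPow_mul _ _ hn]; exact hm'.1
      · intro i hi
        rw [coeff_substPow]
        split_ifs with h
        · obtain ⟨c, rfl⟩ := h
          rw [Nat.mul_div_cancel_left _ (Nat.pos_of_ne_zero hn)]
          exact hm'.2 c (by
            have := Nat.pos_of_ne_zero hn
            exact lt_of_mul_lt_mul_left hi (Nat.zero_le n))
        · rfl
    rw [key, ← hm, Nat.cast_mul]
    rfl

lemma order_rescale (a : ℂ) (ha : a ≠ 0) (σ : PowerSeries ℂ) :
    (PowerSeries.rescale a σ).order = σ.order := by
  rcases eq_or_ne σ 0 with rfl | hσ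
  · rw [map_zero]
  · rw [PowerSeries.order_eq]
    constructor
    · intro i hi
      rw [PowerSeries.coeff_rescale]
      have h1 : PowerSeries.coeff i σ ≠ 0 := by
        have := PowerSeries.order_eq.mp (rfl : σ.order = σ.order)
        exact this.1 i hi
      exact mul_ne_zero (pow_ne_zero _ ha) h1
    · intro i hi
      rw [PowerSeries.coeff_rescale, PowerSeries.coeff_of_lt_order i hi, mul_zero]


lemma evalCurve_eq_eval₂ (n : ℕ) (hn : n ≠ 0) (w : PowerSeries ℂ)
    (φ : Polynomial (PowerSeries ℂ)) :
    evalCurve n w φ = Polynomial.eval₂ (substPowHom n hn) w φ := by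
  rw [Polynomial.eval₂_eq_sum_range]
  simp [evalCurve]

lemma rescale_evalCurve (n : ℕ) (hn : n ≠ 0) (ω : ℂ) (hω : ω ^ n = 1) (w : PowerSeries ℂ)
    (φ : Polynomial (PowerSeries ℂ)) :
    PowerSeries.rescale ω (evalCurve n w φ) = evalCurve n (PowerSeries.rescale ω w) φ := by
  rw [evalCurve_eq_eval₂ n hn, evalCurve_eq_eval₂ n hn]
  have h := Polynomial.hom_eval₂ (p := φ) (f := substPowHom n hn)
    (g := PowerSeries.rescale ω) w
  rw [h]
  congr 1
  refine RingHom.ext fun σ => ?_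
  simp only [RingHom.comp_apply, substPowHom_apply]
  rw [rescale_substPow ω n hn σ, hω, PowerSeries.rescale_one]
  rfl

lemma substPow_evalCurve (n' n : ℕ) (hn' : n' ≠ 0) (hn : n ≠ 0) (w : PowerSeries ℂ)
    (φ : Polynomial (PowerSeries ℂ)) :
    substPow n' (evalCurve n w φ) =
      Polynomial.eval₂ (substPowHom (n' * n) (mul_ne_zero hn' hn)) (substPow n' w) φ := by
  rw [evalCurve_eq_eval₂ n hn]
  have h := Polynomial.hom_eval₂ (p := φ) (f := substPowHom n hn)
    (g := substPowHom n' hn') w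
  rw [← substPowHom_apply n' hn', h]
  congr 1
  refine RingHom.ext fun σ => ?_
  simp only [RingHom.comp_apply, substPowHom_apply]
  exact substPow_substPow n' n hn' hn σ

lemma prod_factorization {p : Polynomial (PowerSeries ℂ)} {M : ℕ}
    (hmon : p.Monic) (hdeg : p.natDegree = M) (r : ℕ → PowerSeries ℂ)
    (hinj : ∀ i < M, ∀ j < M, r i = r j → i = j)
    (hroot : ∀ j < M, Polynomial.IsRoot p (r j)) :
    p = ∏ j ∈ Finset.range M, (Polynomial.X - Polynomial.C (r j)) := by
  classical
  have hp0 : p ≠ 0 := hmon.ne_zero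
  have hnodup : ((Finset.range M).val.map r).Nodup :=
    Multiset.Nodup.map_on
      (fun i hi j hj => hinj i (by simpa using hi) j (by simpa using hj))
      (Finset.range M).nodup
  have hsub : (Finset.range M).val.map r ≤ p.roots := by
    rw [Multiset.le_iff_subset hnodup]
    intro x hx
    obtain ⟨j, hj, rfl⟩ := Multiset.mem_map.mp hx
    rw [Polynomial.mem_roots hp0]
    exact hroot j (by simpa using hj)
  have hcard : p.roots.card = p.natDegree := by
    refine le_antisymm (Polynomial.card_roots' p) ?_
    calc p.natDegree = Multiset.card ((Finset.range M).val.map r) := by simp [hdeg]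
    _ ≤ Multiset.card p.roots := Multiset.card_le_card hsub
  have heq : p.roots = (Finset.range M).val.map r :=
    (Multiset.eq_of_le_of_card_le hsub (by simp [hcard, hdeg])).symm
  have hfac := Polynomial.prod_multiset_X_sub_C_of_monic_of_roots_card_eq hmon hcard
  rw [heq, Multiset.map_map] at hfac
  rw [← hfac, Finset.prod_eq_multiset_prod]
  rfl



lemma substPowHom_congr {m n : ℕ} (h : m = n) (hm : m ≠ 0) (hn : n ≠ 0) :
    substPowHom m hm = substPowHom n hn := by subst h; rfl

lemma order_finset_prod {α : Type*} (s : Finset α) (F : α → PowerSeries ℂ) :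
    (∏ j ∈ s, F j).order = ∑ j ∈ s, (F j).order := by
  classical
  induction s using Finset.induction with
  | empty => simp
  | insert _ _ h ih =>
    rw [Finset.prod_insert h, Finset.sum_insert h, PowerSeries.order_mul, ih]

section CharSeq
variable {N G : ℕ} {B : ℕ → ℕ} {y : PowerSeries ℂ}

lemma Ebar_zero : Ebar B 0 = B 0 := by
  simp [Ebar, Finset.range_one]

lemma Ebar_succ (i : ℕ) : Ebar B (i + 1) = GCDMonoid.gcd (B (i + 1)) (Ebar B i) := by
  rw [Ebar, Ebar, Finset.range_add_one, Finset.gcd_insert]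

lemma Ebar_dvd_succ (i : ℕ) : Ebar B (i + 1) ∣ Ebar B i := by
  rw [Ebar_succ]; exact gcd_dvd_right _ _

lemma Ebar_dvd_B {i j : ℕ} (hj : j ≤ i) : Ebar B i ∣ B j :=
  Finset.gcd_dvd (Finset.mem_range.mpr (by omega))

lemma Ebar_dvd_of_le {i j : ℕ} (hj : i ≤ j) : Ebar B j ∣ Ebar B i := by
  induction j with
  | zero => simpa [Nat.le_zero.mp hj]
  | succ n ih =>
    rcases Nat.lt_or_ge i (n+1) with h | h
    · exact dvd_trans (Ebar_dvd_succ n) (ih (by omega))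
    · have : i = n + 1 := by omega
      subst this; rfl

lemma dvd_Ebar {d i : ℕ} (h : ∀ j ≤ i, d ∣ B j) : d ∣ Ebar B i :=
  Finset.dvd_gcd fun j hj => h j (by simpa [Nat.lt_succ_iff] using hj)

lemma Ebar_pos (hB0 : B 0 = N) (hN : 1 ≤ N) (i : ℕ) : 0 < Ebar B i := by
  rcases Nat.eq_zero_or_pos (Ebar B i) with h | h
  · exfalso
    have := Ebar_dvd_B (B := B) (Nat.zero_le i)
    rw [h] at this
    rw [zero_dvd_iff] at this
    omega
  · exact h
end CharSeq


section CharSeq2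
variable {N G : ℕ} {B : ℕ → ℕ} {y : PowerSeries ℂ}
  (hN : 1 ≤ N)
  (hchar : IsCharSeq N y G B)
  (hprim : ∀ d : ℕ, d ∣ N → (∀ j, PowerSeries.coeff j y ≠ 0 → d ∣ j) → d = 1)

/-- The defining set for `B i`. -/
def charSet (B : ℕ → ℕ) (y : PowerSeries ℂ) (i : ℕ) : Set ℕ :=
  {j : ℕ | PowerSeries.coeff j y ≠ 0 ∧ ¬ Ebar B (i - 1) ∣ j}

include hchar in
lemma B_eq_sInf {i : ℕ} (h1 : 1 ≤ i) (hG : i ≤ G) : B i = sInf (charSet B y i) := by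
  have hg : (Finset.range i).gcd B = Ebar B (i - 1) := by
    have he : i - 1 + 1 = i := by omega
    rw [Ebar, he]
  have h := hchar.2.1 i h1 hG
  rw [hg] at h
  exact h

include hchar hprim in
lemma charSet_nonempty {i : ℕ} (h1 : 1 ≤ i) (hG : i ≤ G) : (charSet B y i).Nonempty := by
  by_contra h
  rw [Set.not_nonempty_iff_eq_empty] at h
  have hall : ∀ j, PowerSeries.coeff j y ≠ 0 → Ebar B (i - 1) ∣ j := by
    intro j hj
    by_contra hd
    exact absurd (Set.eq_empty_iff_forall_notMem.mp h j) (fun hmem => hmem ⟨hj, hd⟩)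
  have hdvdN : Ebar B (i - 1) ∣ N := by
    have := Ebar_dvd_B (B := B) (Nat.zero_le (i - 1))
    rwa [hchar.1] at this
  have := hprim _ hdvdN hall
  have hne := hchar.2.2.2 (i - 1) (by omega)
  rw [show (Finset.range (i - 1 + 1)).gcd B = Ebar B (i - 1) from rfl] at hne
  exact hne this

include hchar hprim in
lemma B_mem {i : ℕ} (h1 : 1 ≤ i) (hG : i ≤ G) :
    PowerSeries.coeff (B i) y ≠ 0 ∧ ¬ Ebar B (i - 1) ∣ B i := by
  have := Nat.sInf_mem (charSet_nonempty hchar hprim h1 hG)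
  rwa [← B_eq_sInf hchar h1 hG] at this

include hchar in
lemma B_low {i : ℕ} (h1 : 1 ≤ i) (hG : i ≤ G) {j : ℕ} (hj : j < B i)
    (hc : PowerSeries.coeff j y ≠ 0) : Ebar B (i - 1) ∣ j := by
  by_contra hd
  have : j ∈ charSet B y i := ⟨hc, hd⟩
  have := Nat.sInf_le this
  rw [← B_eq_sInf hchar h1 hG] at this
  omega

include hchar hprim in
lemma B_strictmono {i : ℕ} (h1 : 1 ≤ i) (hG : i + 1 ≤ G) : B i < B (i + 1) := by
  have hmem := B_mem hchar hprim (by omega) hG (i := i + 1)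
  by_contra h
  push_neg at h
  rcases Nat.lt_or_ge (B (i + 1)) (B i) with hlt | hge
  · have hlow := B_low hchar h1 (by omega) hlt hmem.1
    have hEe : Ebar B i ∣ Ebar B (i - 1) := Ebar_dvd_of_le (by omega)
    have h2 : Ebar B i ∣ B (i + 1) := dvd_trans hEe hlow
    simp only [Nat.add_sub_cancel] at hmem
    exact hmem.2 h2
  · have : B (i + 1) = B i := by omega
    have h2 : Ebar B i ∣ B (i + 1) := this ▸ Ebar_dvd_B (le_refl i)
    simp only [Nat.add_sub_cancel] at hmem
    exact hmem.2 h2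

include hchar hprim in
lemma B_mono {i i' : ℕ} (h1 : 1 ≤ i) (hii' : i ≤ i') (hG : i' ≤ G) : B i ≤ B i' := by
  induction i' with
  | zero => omega
  | succ n ih =>
    rcases Nat.lt_or_ge i (n + 1) with h | h
    · have hn1 : 1 ≤ n := by omega
      calc B i ≤ B n := ih (by omega) (by omega)
      _ ≤ B (n + 1) := le_of_lt (B_strictmono hchar hprim hn1 hG)
    · have : i = n + 1 := by omega
      subst this; rfl

include hchar hprim in
lemma order_rescale_sub (u : ℂ) {i : ℕ} (h1 : 1 ≤ i) (hG : i ≤ G)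
    (hu1 : u ^ Ebar B (i - 1) = 1) (hu2 : u ^ Ebar B i ≠ 1) :
    (PowerSeries.rescale u y - y).order = (B i : ℕ∞) := by
  have hdvd1 : orderOf u ∣ Ebar B (i - 1) := orderOf_dvd_of_pow_eq_one hu1
  have hdvd2 : ¬ orderOf u ∣ Ebar B i := fun h => hu2 (orderOf_dvd_iff_pow_eq_one.mp h)
  have hndvdBi : ¬ orderOf u ∣ B i := by
    intro h
    apply hdvd2
    have : i - 1 + 1 = i := by omega
    rw [← this, Ebar_succ]
    exact dvd_gcd (this ▸ h) hdvd1
  have hmem := B_mem hchar hprim h1 hG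
  rw [PowerSeries.order_eq_nat]
  constructor
  · rw [map_sub, PowerSeries.coeff_rescale]
    have hu : u ^ B i ≠ 1 := fun h => hndvdBi (orderOf_dvd_of_pow_eq_one h)
    intro hc
    rw [sub_eq_zero] at hc
    have hz : (u ^ B i - 1) * PowerSeries.coeff (B i) y = 0 := by
      rw [sub_mul, one_mul, hc, sub_self]
    rcases mul_eq_zero.mp hz with h | h
    · exact hu (by rwa [sub_eq_zero] at h)
    · exact hmem.1 h
  · intro j hj
    rw [map_sub, PowerSeries.coeff_rescale]
    by_cases hc : PowerSeries.coeff j y = 0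
    · rw [hc, mul_zero, sub_zero]
    · have := B_low hchar h1 hG hj hc
      have : u ^ j = 1 := by
        obtain ⟨c, rfl⟩ := dvd_trans hdvd1 this
        rw [pow_mul, pow_orderOf_eq_one, one_pow]
      rw [this, one_mul, sub_self]
end CharSeq2


/-- **Noether's formula for the intersection number of two branches.**
Let `φ` be a second monic irreducible polynomial in `ℂ[[X]][Y]`, of degree `M ≥ 1`, with
`φ ≠ f`, parameterized by `X = U ^ M`, `Y = z (U)`.  Let `D` be the maximum of the
`S`-adic orders `ord_S (y (ω S ^ M) - z (ω' S ^ N))` over `N`-th roots of unity `ω` and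
`M`-th roots of unity `ω'` (so the coincidence order is `K (f, φ) = D / (N M)`), and let
`k` be the smallest index in `{0, …, G}` with `K (f, φ) < B (k+1) / N`
(i.e. `D < M * B (k+1)`, vacuous for `k = G`).  Then
`N * (f, φ) = M * Σ_{i=1}^{k} (E (i-1) - E i) * B i + E k * D`, which is the formula
`(f,φ)/M = Σ ((E (i-1) - E i)/N) B i + E k * K (f,φ)` cleared of denominators. -/
theorem stmt_9 (f : Polynomial (PowerSeries ℂ)) (N G : ℕ) (B : ℕ → ℕ) (y : PowerSeries ℂ)
    (hN : 1 ≤ N) (hmonic : f.Monic) (hdeg : f.natDegree = N) (hirr : Irreducible f)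
    (h00 : PowerSeries.constantCoeff (Polynomial.eval 0 f) = 0)
    (hparam : IsNPParam f N y) (hchar : IsCharSeq N y G B)
    (φ : Polynomial (PowerSeries ℂ)) (M : ℕ) (z : PowerSeries ℂ)
    (hM : 1 ≤ M) (hφmonic : φ.Monic) (hφdeg : φ.natDegree = M) (hφirr : Irreducible φ)
    (hφ00 : PowerSeries.constantCoeff (Polynomial.eval 0 φ) = 0) (hφne : φ ≠ f)
    (hφparam : IsNPParam φ M z)
    (D k : ℕ)
    (hDmax : ∃ ω ω' : ℂ, ω ^ N = 1 ∧ ω' ^ M = 1 ∧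
      (substPow M (PowerSeries.rescale ω y) -
        substPow N (PowerSeries.rescale ω' z)).order = (D : ℕ∞))
    (hDub : ∀ ω ω' : ℂ, ω ^ N = 1 → ω' ^ M = 1 →
      (substPow M (PowerSeries.rescale ω y) -
        substPow N (PowerSeries.rescale ω' z)).order ≤ (D : ℕ∞))
    (hkG : k ≤ G) (hkub : k < G → D < M * B (k + 1))
    (hklb : ∀ l < k, M * B (l + 1) ≤ D) :
    (N : ℕ∞) * (evalCurve N y φ).order =
      ((M * ∑ i ∈ Finset.Icc 1 k, (Ebar B (i - 1) - Ebar B i) * B i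
        + Ebar B k * D : ℕ) : ℕ∞) := by
  classical
  have hN0 : N ≠ 0 := by omega
  have hM0 : M ≠ 0 := by omega
  have hNM0 : N * M ≠ 0 := mul_ne_zero hN0 hM0
  obtain ⟨hevalφ, hz0, hzprim⟩ := hφparam
  obtain ⟨hevalf, hy0, hyprim⟩ := hparam
  have hζ : IsPrimitiveRoot (Complex.exp (2 * Real.pi * Complex.I / M)) M :=
    Complex.isPrimitiveRoot_exp M hM0
  set ζ : ℂ := Complex.exp (2 * Real.pi * Complex.I / M) with hζdef
  have hζM : ζ ^ M = 1 := hζ.pow_eq_one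
  have hζ0 : ζ ≠ 0 := fun h => by
    rw [h, zero_pow hM0] at hζM
    exact zero_ne_one hζM
  have hζjM : ∀ j : ℕ, (ζ ^ j) ^ M = 1 := fun j => by
    rw [← pow_mul, mul_comm j M, pow_mul, hζM, one_pow]
  set q : Polynomial (PowerSeries ℂ) := φ.map (substPowHom (N * M) hNM0) with hq
  -- every `substPow N (rescale ω' z)` with `ω' ^ M = 1` is a root of `q`
  have hroot : ∀ ω' : ℂ, ω' ^ M = 1 →
      Polynomial.eval (substPow N (PowerSeries.rescale ω' z)) q = 0 := by
    intro ω' hω'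
    rw [hq, Polynomial.eval_map, ← substPow_evalCurve N M hN0 hM0 (PowerSeries.rescale ω' z) φ,
      ← rescale_evalCurve M hM0 ω' hω' z φ, hevalφ, map_zero, substPow_zero]
  -- the roots are pairwise distinct
  have hrinj : ∀ i < M, ∀ j < M,
      substPow N (PowerSeries.rescale (ζ ^ i) z) = substPow N (PowerSeries.rescale (ζ ^ j) z) →
      i = j := by
    intro i hi j hj hij
    have h1 : PowerSeries.rescale (ζ ^ i) z = PowerSeries.rescale (ζ ^ j) z :=
      substPow_injective N hN0 hij
    have hζj0 : (ζ : ℂ) ^ j ≠ 0 := pow_ne_zero _ hζ0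
    set u : ℂ := ζ ^ i * (ζ ^ j)⁻¹ with hu
    have huM : u ^ M = 1 := by
      rw [hu, mul_pow, inv_pow, hζjM, hζjM, inv_one, mul_one]
    have hud : ∀ l, PowerSeries.coeff l z ≠ 0 → orderOf u ∣ l := by
      intro l hl
      have hcl := congrArg (PowerSeries.coeff l) h1
      rw [PowerSeries.coeff_rescale, PowerSeries.coeff_rescale] at hcl
      have hpow : (ζ ^ i) ^ l = (ζ ^ j) ^ l := mul_right_cancel₀ hl hcl
      have hul : u ^ l = 1 := by
        rw [hu, mul_pow, inv_pow, hpow, mul_inv_cancel₀ (pow_ne_zero _ hζj0)]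
      exact orderOf_dvd_of_pow_eq_one hul
    have hu1 : u = 1 := by
      have := hzprim (orderOf u) (orderOf_dvd_of_pow_eq_one huM) hud
      rwa [orderOf_eq_one_iff] at this
    have : ζ ^ i = ζ ^ j := by
      rwa [hu, mul_inv_eq_one₀ hζj0] at hu1
    exact hζ.pow_inj hi hj this
  have hqmon : q.Monic := hφmonic.map _
  have hqdeg : q.natDegree = M := by rw [hq, hφmonic.natDegree_map, hφdeg]
  have hfac : q = ∏ j ∈ Finset.range M,
      (Polynomial.X - Polynomial.C (substPow N (PowerSeries.rescale (ζ ^ j) z))) :=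
    prod_factorization hqmon hqdeg _ hrinj (fun j _ => hroot (ζ ^ j) (hζjM j))
  set P : ℕ∞ := (evalCurve N y φ).order with hP
  -- Key A : row sums
  have keyA : ∀ ω : ℂ, ω ^ N = 1 →
      ∑ j ∈ Finset.range M,
        (substPow M (PowerSeries.rescale ω y) -
          substPow N (PowerSeries.rescale (ζ ^ j) z)).order = (M : ℕ∞) * P := by
    intro ω hω
    have hω0 : ω ≠ 0 := fun h => by
      rw [h, zero_pow hN0] at hω
      exact zero_ne_one hω
    have h1 : Polynomial.eval (substPow M (PowerSeries.rescale ω y)) q =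
        ∏ j ∈ Finset.range M,
          (substPow M (PowerSeries.rescale ω y) - substPow N (PowerSeries.rescale (ζ ^ j) z)) := by
      conv_lhs => rw [hfac]
      rw [Polynomial.eval_prod]
      exact Finset.prod_congr rfl fun j _ => by
        rw [Polynomial.eval_sub, Polynomial.eval_X, Polynomial.eval_C]
    have h2 : Polynomial.eval (substPow M (PowerSeries.rescale ω y)) q =
        substPow M (PowerSeries.rescale ω (evalCurve N y φ)) := by
      rw [hq, Polynomial.eval_map,
        ← substPowHom_congr (Nat.mul_comm M N) (mul_ne_zero hM0 hN0) hNM0,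
        ← substPow_evalCurve M N hM0 hN0 (PowerSeries.rescale ω y) φ,
        rescale_evalCurve N hN0 ω hω y φ]
    calc ∑ j ∈ Finset.range M,
        (substPow M (PowerSeries.rescale ω y) - substPow N (PowerSeries.rescale (ζ ^ j) z)).order
        = (∏ j ∈ Finset.range M,
            (substPow M (PowerSeries.rescale ω y) -
              substPow N (PowerSeries.rescale (ζ ^ j) z))).order := (order_finset_prod _ _).symm
    _ = (M : ℕ∞) * P := by
      rw [← h1, h2, order_substPow M hM0, order_rescale ω hω0]
  -- Key B : column sums
  have keyB : ∀ j : ℕ, j < M →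
      ∑ ω ∈ Polynomial.nthRootsFinset N (1 : ℂ),
        (substPow M (PowerSeries.rescale ω y) -
          substPow N (PowerSeries.rescale (ζ ^ j) z)).order =
      ((M * ∑ i ∈ Finset.Icc 1 k, (Ebar B (i - 1) - Ebar B i) * B i
        + Ebar B k * D : ℕ) : ℕ∞) := by
    intro j hj
    obtain ⟨ω1, ω1', hω1, hω1', hord⟩ := hDmax
    have hω1'0 : ω1' ≠ 0 := fun h => by
      rw [h, zero_pow hM0] at hω1'; exact zero_ne_one hω1'
    obtain ⟨η, hη⟩ := IsAlgClosed.exists_pow_nat_eq (ζ ^ j * ω1'⁻¹) (Nat.pos_of_ne_zero hN0)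
    have hc0 : ζ ^ j * ω1'⁻¹ ≠ 0 := mul_ne_zero (pow_ne_zero _ hζ0) (inv_ne_zero hω1'0)
    have hη0 : η ≠ 0 := fun h => hc0 (by rw [← hη, h, zero_pow hN0])
    set ω0 : ℂ := ω1 * η ^ M with hω0
    have hω0N : ω0 ^ N = 1 := by
      rw [hω0, mul_pow, hω1, one_mul, ← pow_mul, mul_comm M N, pow_mul, hη, mul_pow, inv_pow,
        hζjM, hω1', inv_one, mul_one]
    have hω00 : ω0 ≠ 0 := fun h => by
      rw [h, zero_pow hN0] at hω0N; exact zero_ne_one hω0N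
    have hD : (substPow M (PowerSeries.rescale ω0 y) -
        substPow N (PowerSeries.rescale (ζ ^ j) z)).order = (D : ℕ∞) := by
      have hres : PowerSeries.rescale η
          (substPow M (PowerSeries.rescale ω1 y) - substPow N (PowerSeries.rescale ω1' z)) =
          substPow M (PowerSeries.rescale ω0 y) -
            substPow N (PowerSeries.rescale (ζ ^ j) z) := by
        rw [map_sub, rescale_substPow η M hM0, rescale_substPow η N hN0,
          PowerSeries.rescale_rescale, PowerSeries.rescale_rescale]
        congr 2
        rw [hη, mul_comm ω1', mul_assoc, inv_mul_cancel₀ hω1'0, mul_one]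
      rw [← hres, order_rescale η hη0, hord]
    have hstep2 : ∀ ω : ℂ, ω ^ N = 1 →
        (substPow M (PowerSeries.rescale ω y) -
          substPow N (PowerSeries.rescale (ζ ^ j) z)).order =
        min (D : ℕ∞) ((M : ℕ∞) * (PowerSeries.rescale (ω * ω0⁻¹) y - y).order) := by
      intro ω hω
      have hσ : substPow M (PowerSeries.rescale ω y) - substPow M (PowerSeries.rescale ω0 y)
          = substPow M (PowerSeries.rescale ω y - PowerSeries.rescale ω0 y) := by
        have hsub := map_sub (substPowHom M hM0) (PowerSeries.rescale ω y)
          (PowerSeries.rescale ω0 y)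
        simp only [substPowHom_apply] at hsub
        exact hsub.symm
      have hτ : PowerSeries.rescale ω y - PowerSeries.rescale ω0 y
          = PowerSeries.rescale ω0 (PowerSeries.rescale (ω * ω0⁻¹) y - y) := by
        rw [map_sub (PowerSeries.rescale ω0), PowerSeries.rescale_rescale]
        have he : ω * ω0⁻¹ * ω0 = ω := by field_simp
        rw [he]
      have haorder : (substPow M (PowerSeries.rescale ω y) -
            substPow M (PowerSeries.rescale ω0 y)).order
          = (M : ℕ∞) * (PowerSeries.rescale (ω * ω0⁻¹) y - y).order := by
        rw [hσ, hτ, order_substPow M hM0, order_rescale ω0 hω00]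
      have hdiff : substPow M (PowerSeries.rescale ω y) -
            substPow N (PowerSeries.rescale (ζ ^ j) z)
          = (substPow M (PowerSeries.rescale ω y) - substPow M (PowerSeries.rescale ω0 y)) +
            (substPow M (PowerSeries.rescale ω0 y) -
              substPow N (PowerSeries.rescale (ζ ^ j) z)) :=
        (sub_add_sub_cancel _ _ _).symm
      rcases eq_or_ne ((M : ℕ∞) * (PowerSeries.rescale (ω * ω0⁻¹) y - y).order) (D : ℕ∞) with
        hcase | hcase
      · rw [hcase, min_self]
        refine le_antisymm (hDub ω (ζ ^ j) hω (hζjM j)) ?_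
        have hmin := PowerSeries.min_order_le_order_add
          (substPow M (PowerSeries.rescale ω y) - substPow M (PowerSeries.rescale ω0 y))
          (substPow M (PowerSeries.rescale ω0 y) -
            substPow N (PowerSeries.rescale (ζ ^ j) z))
        rw [← hdiff, haorder, hcase, hD, min_self] at hmin
        exact hmin
      · rw [hdiff, PowerSeries.order_add_of_order_ne _ _ (by rw [haorder, hD]; exact hcase),
          haorder, hD]
        exact min_comm _ _
    have hsum_eq : ∑ ω ∈ Polynomial.nthRootsFinset N (1 : ℂ),
        (substPow M (PowerSeries.rescale ω y) -
          substPow N (PowerSeries.rescale (ζ ^ j) z)).order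
        = ∑ u ∈ Polynomial.nthRootsFinset N (1 : ℂ),
            min (D : ℕ∞) ((M : ℕ∞) * (PowerSeries.rescale u y - y).order) := by
      rw [Finset.sum_congr rfl (fun ω hω => hstep2 ω
        ((Polynomial.mem_nthRootsFinset (Nat.pos_of_ne_zero hN0) 1).mp hω))]
      refine Finset.sum_nbij' (i := fun ω => ω * ω0⁻¹) (j := fun u => u * ω0)
        ?_ ?_ ?_ ?_ ?_
      · intro a ha
        rw [Polynomial.mem_nthRootsFinset (Nat.pos_of_ne_zero hN0) 1] at ha ⊢
        rw [mul_pow, inv_pow, ha, hω0N, inv_one, mul_one]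
      · intro a ha
        rw [Polynomial.mem_nthRootsFinset (Nat.pos_of_ne_zero hN0) 1] at ha ⊢
        rw [mul_pow, ha, hω0N, mul_one]
      · intro a _
        field_simp
      · intro a _
        field_simp
      · intro a _
        rfl
    rw [hsum_eq]
    -- now the combinatorial computation
    have hEpos : ∀ i, 0 < Ebar B i := Ebar_pos hchar.1 hN
    have hg1 : min (D : ℕ∞) ((M : ℕ∞) * (PowerSeries.rescale 1 y - y).order) = (D : ℕ∞) := by
      rw [PowerSeries.rescale_one]
      simp only [RingHom.id_apply, sub_self, PowerSeries.order_zero]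
      rw [ENat.mul_top (by exact_mod_cast hM0 : (M : ℕ∞) ≠ 0)]
      exact min_eq_left le_top
    have hsubs : ∀ i : ℕ, Polynomial.nthRootsFinset (Ebar B (i + 1)) (1 : ℂ) ⊆
        Polynomial.nthRootsFinset (Ebar B i) (1 : ℂ) := by
      intro i u hu
      have h := (Polynomial.mem_nthRootsFinset (hEpos (i + 1)) 1).mp hu
      obtain ⟨c, hc⟩ := Ebar_dvd_succ (B := B) i
      exact (Polynomial.mem_nthRootsFinset (hEpos i) 1).mpr (by rw [hc, pow_mul, h, one_pow])
    have hgdiff : ∀ i : ℕ, 1 ≤ i → i ≤ G →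
        ∀ u ∈ Polynomial.nthRootsFinset (Ebar B (i - 1)) (1 : ℂ) \
          Polynomial.nthRootsFinset (Ebar B i) (1 : ℂ),
        min (D : ℕ∞) ((M : ℕ∞) * (PowerSeries.rescale u y - y).order)
          = min (D : ℕ∞) ((M : ℕ∞) * (B i : ℕ∞)) := by
      intro i h1 hG u hu
      rw [Finset.mem_sdiff] at hu
      have hu1 := (Polynomial.mem_nthRootsFinset (hEpos (i - 1)) 1).mp hu.1
      have hu2 : u ^ Ebar B i ≠ 1 := fun h =>
        hu.2 ((Polynomial.mem_nthRootsFinset (hEpos i) 1).mpr h)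
      rw [order_rescale_sub hchar hyprim u h1 hG hu1 hu2]
    have hcard : ∀ e : ℕ, e ≠ 0 → (Polynomial.nthRootsFinset e (1 : ℂ)).card = e := fun e he =>
      (Complex.isPrimitiveRoot_exp e he).card_nthRootsFinset
    have hEmono : ∀ i : ℕ, Ebar B (i + 1) ≤ Ebar B i := fun i =>
      Nat.le_of_dvd (hEpos i) (Ebar_dvd_succ i)
    have phase1 : ∀ m i : ℕ, i + m = G → k ≤ i →
        ∑ u ∈ Polynomial.nthRootsFinset (Ebar B i) (1 : ℂ),
          min (D : ℕ∞) ((M : ℕ∞) * (PowerSeries.rescale u y - y).order)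
        = ((Ebar B i * D : ℕ) : ℕ∞) := by
      intro m
      induction m with
      | zero =>
        intro i hi _
        have hE1 : Ebar B i = 1 := by
          rw [show i = G from by omega]
          exact hchar.2.2.1
        rw [hE1]
        have hset : Polynomial.nthRootsFinset 1 (1 : ℂ) = {1} := by
          obtain ⟨a, ha⟩ := Finset.card_eq_one.mp (hcard 1 one_ne_zero)
          have h1 : (1 : ℂ) ∈ Polynomial.nthRootsFinset 1 (1 : ℂ) :=
            (Polynomial.mem_nthRootsFinset one_pos 1).mpr (one_pow 1)
          rw [ha] at h1 ⊢
          rw [Finset.mem_singleton] at h1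
          rw [h1]
        rw [hset, Finset.sum_singleton, hg1, one_mul]
      | succ m ih =>
        intro i hi hk
        have hiG : i < G := by omega
        have hki : k < G := by omega
        have hsplit := Finset.sum_sdiff (f := fun u =>
          min (D : ℕ∞) ((M : ℕ∞) * (PowerSeries.rescale u y - y).order)) (hsubs i)
        have hconst : ∀ u ∈ Polynomial.nthRootsFinset (Ebar B i) (1 : ℂ) \
            Polynomial.nthRootsFinset (Ebar B (i + 1)) (1 : ℂ),
            min (D : ℕ∞) ((M : ℕ∞) * (PowerSeries.rescale u y - y).order) = (D : ℕ∞) := by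
          intro u hu
          have hgd := hgdiff (i + 1) (by omega) (by omega) u (by
            simpa only [Nat.add_sub_cancel] using hu)
          rw [hgd]
          have hlt : D < M * B (i + 1) := by
            calc D < M * B (k + 1) := hkub hki
            _ ≤ M * B (i + 1) :=
              Nat.mul_le_mul_left _ (B_mono hchar hyprim (by omega) (by omega) (by omega))
          refine min_eq_left ?_
          rw [← Nat.cast_mul]
          exact_mod_cast hlt.le
        rw [← hsplit, Finset.sum_congr rfl hconst, Finset.sum_const,
          Finset.card_sdiff_of_subset (hsubs i), hcard _ (hEpos (i + 1)).ne', hcard _ (hEpos i).ne',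
          ih (i + 1) (by omega) (by omega), nsmul_eq_mul, ← Nat.cast_mul, ← Nat.cast_add]
        exact congrArg Nat.cast (by rw [← add_mul, Nat.sub_add_cancel (hEmono i)])
    have phase2 : ∀ m i : ℕ, i + m = k →
        ∑ u ∈ Polynomial.nthRootsFinset (Ebar B i) (1 : ℂ),
          min (D : ℕ∞) ((M : ℕ∞) * (PowerSeries.rescale u y - y).order)
        = ((M * ∑ l ∈ Finset.Icc (i + 1) k, (Ebar B (l - 1) - Ebar B l) * B l
            + Ebar B k * D : ℕ) : ℕ∞) := by
      intro m
      induction m with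
      | zero =>
        intro i hi
        have hik : i = k := by omega
        rw [hik, phase1 (G - k) k (by omega) le_rfl]
        have hempty : Finset.Icc (k + 1) k = ∅ := by
          rw [Finset.Icc_eq_empty]
          omega
        rw [hempty, Finset.sum_empty, Nat.mul_zero, Nat.zero_add]
      | succ m ih =>
        intro i hi
        have hik : i < k := by omega
        have hsplit := Finset.sum_sdiff (f := fun u =>
          min (D : ℕ∞) ((M : ℕ∞) * (PowerSeries.rescale u y - y).order)) (hsubs i)
        have hconst : ∀ u ∈ Polynomial.nthRootsFinset (Ebar B i) (1 : ℂ) \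
            Polynomial.nthRootsFinset (Ebar B (i + 1)) (1 : ℂ),
            min (D : ℕ∞) ((M : ℕ∞) * (PowerSeries.rescale u y - y).order)
              = ((M * B (i + 1) : ℕ) : ℕ∞) := by
          intro u hu
          rw [hgdiff (i + 1) (by omega) (by omega) u (by
            simpa only [Nat.add_sub_cancel] using hu)]
          rw [← Nat.cast_mul]
          refine min_eq_right ?_
          exact_mod_cast hklb i hik
        rw [← hsplit, Finset.sum_congr rfl hconst, Finset.sum_const,
          Finset.card_sdiff_of_subset (hsubs i), hcard _ (hEpos (i + 1)).ne', hcard _ (hEpos i).ne',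
          ih (i + 1) (by omega), nsmul_eq_mul, ← Nat.cast_mul, ← Nat.cast_add]
        refine congrArg Nat.cast ?_
        have hIcc : Finset.Icc (i + 1) k = insert (i + 1) (Finset.Icc (i + 2) k) := by
          ext x
          simp only [Finset.mem_Icc, Finset.mem_insert]
          omega
        have hnotmem : (i + 1) ∉ Finset.Icc (i + 2) k := by
          simp [Finset.mem_Icc]
        rw [hIcc, Finset.sum_insert hnotmem]
        simp only [Nat.add_sub_cancel]
        ring
    have hE0 : Ebar B 0 = N := by
      rw [Ebar_zero, hchar.1]
    have hfin := phase2 k 0 (by omega)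
    rw [hE0] at hfin
    rw [hfin]

  -- assemble
  have hRNcard : (Polynomial.nthRootsFinset N (1 : ℂ)).card = N :=
    (Complex.isPrimitiveRoot_exp N hN0).card_nthRootsFinset
  have hmemRN : ∀ ω ∈ Polynomial.nthRootsFinset N (1 : ℂ), ω ^ N = 1 := fun ω hω =>
    (Polynomial.mem_nthRootsFinset (Nat.pos_of_ne_zero hN0) 1).mp hω
  set RHSnat : ℕ := M * ∑ i ∈ Finset.Icc 1 k, (Ebar B (i - 1) - Ebar B i) * B i
    + Ebar B k * D with hRHS
  have hswap := Finset.sum_comm (s := Polynomial.nthRootsFinset N (1 : ℂ)) (t := Finset.range M)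
    (f := fun ω j => (substPow M (PowerSeries.rescale ω y) -
      substPow N (PowerSeries.rescale (ζ ^ j) z)).order)
  have hL : ∑ ω ∈ Polynomial.nthRootsFinset N (1 : ℂ), ∑ j ∈ Finset.range M,
      (substPow M (PowerSeries.rescale ω y) -
        substPow N (PowerSeries.rescale (ζ ^ j) z)).order
      = (N : ℕ∞) * ((M : ℕ∞) * P) := by
    rw [Finset.sum_congr rfl (fun ω hω => keyA ω (hmemRN ω hω)), Finset.sum_const, hRNcard,
      nsmul_eq_mul]
  have hR : ∑ j ∈ Finset.range M, ∑ ω ∈ Polynomial.nthRootsFinset N (1 : ℂ),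
      (substPow M (PowerSeries.rescale ω y) -
        substPow N (PowerSeries.rescale (ζ ^ j) z)).order
      = (M : ℕ∞) * (RHSnat : ℕ∞) := by
    rw [Finset.sum_congr rfl (fun j hj => keyB j (Finset.mem_range.mp hj)), Finset.sum_const,
      Finset.card_range, nsmul_eq_mul]
  have hmain : (N : ℕ∞) * ((M : ℕ∞) * P) = (M : ℕ∞) * (RHSnat : ℕ∞) := by
    rw [← hL, hswap, hR]
  have hPfin : P ≠ ⊤ := by
    intro hPtop
    have h1 := keyA 1 (one_pow N)
    rw [hPtop, ENat.mul_top (by exact_mod_cast hM0 : (M : ℕ∞) ≠ 0)] at h1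
    have h2 : ∑ j ∈ Finset.range M,
        (substPow M (PowerSeries.rescale 1 y) -
          substPow N (PowerSeries.rescale (ζ ^ j) z)).order
        ≤ ∑ j ∈ Finset.range M, (D : ℕ∞) :=
      Finset.sum_le_sum fun j _ => hDub 1 (ζ ^ j) (one_pow N) (hζjM j)
    rw [h1, Finset.sum_const, Finset.card_range, nsmul_eq_mul, ← Nat.cast_mul] at h2
    exact WithTop.coe_ne_top (top_le_iff.mp h2)
  obtain ⟨p, hp0⟩ := WithTop.ne_top_iff_exists.mp hPfin
  have hp : (p : ℕ∞) = P := by rw [← hp0]; rfl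
  have hnat : N * (M * p) = M * RHSnat := by
    have h := hmain
    rw [← hp] at h
    exact_mod_cast h
  have hnat' : M * (N * p) = M * RHSnat := by rw [← hnat]; ring
  have hfinal : N * p = RHSnat := Nat.eq_of_mul_eq_mul_left (Nat.pos_of_ne_zero hM0) hnat'
  rw [← hp]
  exact_mod_cast hfinal
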